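/- For every t ∈ [0,1], the series identity Σ_{n≥1} (n^{n−1}/n!) (t e^{−t})^{n−1} = e^{t} holds. -/

import Mathlib

open Finset Function
open scoped fwdDiff

lemma fwd_pow_zero : ∀ j : ℕ, ∀ c : ℝ, ∀ m : ℕ, j < m →
    (fwdDiff (1:ℕ))^[m] (fun x : ℕ => ((x : ℝ) + c) ^ j) = 0 := by
  intro j
  induction j using Nat.strong_induction_on with
  | _ j IH =>
    intro c m hm
    obtain ⟨m', rfl⟩ : ∃ m', m = m' + 1 := ⟨m - 1, by omega⟩
    rw [Function.iterate_succ_apply]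
    have hstep : fwdDiff (1:ℕ) (fun x : ℕ => ((x : ℝ) + c) ^ j)
        = ∑ i ∈ range j, fun x : ℕ => (j.choose i : ℝ) * ((x : ℝ) + c) ^ i := by
      funext x
      have hbin : (((x : ℝ) + c) + 1) ^ j
          = ∑ i ∈ range (j + 1), ((x : ℝ) + c) ^ i * (j.choose i : ℝ) := by
        have := add_pow ((x : ℝ) + c) 1 j
        simpa using this
      simp only [fwdDiff, Finset.sum_apply]
      push_cast
      rw [show ((x : ℝ) + 1 + c) = (((x : ℝ) + c) + 1) by ring, hbin,
        Finset.sum_range_succ]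
      simp [mul_comm]
    rw [hstep, fwdDiff_iter_finset_sum]
    have : ∀ i ∈ range j, (fwdDiff (1:ℕ))^[m'] (fun x : ℕ => (j.choose i : ℝ) * ((x : ℝ) + c) ^ i) = 0 := by
      intro i hi
      have hi' : i < j := mem_range.mp hi
      rw [show (fun x : ℕ => (j.choose i : ℝ) * ((x : ℝ) + c) ^ i)
          = ((j.choose i : ℝ) • fun x : ℕ => ((x : ℝ) + c) ^ i) by funext x; simp,
        fwdDiff_iter_const_smul, IH i hi' c m' (by omega), smul_zero]
    rw [Finset.sum_congr rfl this]
    simp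

lemma alt_sum_zero (m : ℕ) (hm : 1 ≤ m) :
    ∑ n ∈ range (m + 1), (-1 : ℝ) ^ (m - n) * (m.choose n : ℝ) * ((n : ℝ) + 1) ^ (m - 1) = 0 := by
  have h := fwdDiff_iter_eq_sum_shift (1 : ℕ) (fun x : ℕ => ((x : ℝ) + 1) ^ (m - 1)) m 0
  rw [fwd_pow_zero (m - 1) 1 m (by omega)] at h
  have : (0 : ℝ) = ∑ k ∈ range (m + 1),
      (-1 : ℝ) ^ (m - k) * (m.choose k : ℝ) * ((k : ℝ) + 1) ^ (m - 1) := by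
    rw [show (0:ℝ) = (0 : ℕ → ℝ) 0 from rfl, h]
    refine Finset.sum_congr rfl fun k _ => ?_
    rw [zsmul_eq_mul]
    simp only [zero_add, smul_eq_mul, mul_one]
    push_cast
    ring
  linarith [this]

open Finset Function Real

noncomputable def aa (n : ℕ) : ℝ := ((n : ℝ) + 1) ^ n / (Nat.factorial (n + 1) : ℝ)

lemma aa_nonneg (n : ℕ) : 0 ≤ aa n := by unfold aa; positivity

lemma exp_hasSum (x : ℝ) : HasSum (fun k : ℕ => x ^ k / (Nat.factorial k : ℝ)) (Real.exp x) := by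
  have h : Real.exp x = ∑' k : ℕ, x ^ k / (Nat.factorial k : ℝ) := by
    rw [Real.exp_eq_exp_ℝ, NormedSpace.exp_eq_tsum_div]
  rw [h]
  exact (Real.summable_pow_div_factorial x).hasSum

lemma aa_le (n : ℕ) : aa n ≤ Real.exp 1 ^ (n + 1) := by
  have h1 : aa n ≤ ((n : ℝ) + 1) ^ (n + 1) / (Nat.factorial (n + 1) : ℝ) := by
    unfold aa
    have hb : (1:ℝ) ≤ (n : ℝ) + 1 := by linarith [Nat.cast_nonneg (α := ℝ) n]
    have hp : ((n : ℝ) + 1) ^ n ≤ ((n : ℝ) + 1) ^ (n + 1) := pow_le_pow_right₀ hb (by omega)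
    gcongr
  refine h1.trans ?_
  calc ((n : ℝ) + 1) ^ (n + 1) / (Nat.factorial (n + 1) : ℝ)
      ≤ Real.exp ((n : ℝ) + 1) := Real.pow_div_factorial_le_exp (x := (n:ℝ)+1) (by positivity) (n + 1)
    _ = Real.exp 1 ^ (n + 1) := by
        rw [← Real.exp_nat_mul]
        norm_num

lemma exp_sq_lt_8 : Real.exp 1 ^ 2 < 8 := by
  have h := Real.exp_one_lt_d9
  nlinarith [Real.exp_pos 1]

noncomputable def cc (t : ℝ) : ℕ × ℕ → ℝ :=
  fun p => aa p.1 * t ^ p.1 * (-(((p.1 : ℝ) + 1) * t)) ^ p.2 / (Nat.factorial p.2 : ℝ)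

lemma cc_row (t : ℝ) (n : ℕ) :
    HasSum (fun k => cc t (n, k)) (aa n * t ^ n * Real.exp (-(((n : ℝ) + 1) * t))) := by
  have h := (exp_hasSum (-(((n : ℝ) + 1) * t))).mul_left (aa n * t ^ n)
  refine h.congr_fun fun k => ?_
  simp only [cc]
  ring

lemma cc_abs (t : ℝ) (h0 : 0 < t) (p : ℕ × ℕ) :
    |cc t p| = aa p.1 * t ^ p.1 * (((p.1 : ℝ) + 1) * t) ^ p.2 / (Nat.factorial p.2 : ℝ) := by
  obtain ⟨n, k⟩ := p
  have h : cc t (n, k)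
      = (-1 : ℝ) ^ k * (aa n * t ^ n * (((n : ℝ) + 1) * t) ^ k / (Nat.factorial k : ℝ)) := by
    simp only [cc]
    rw [show (-((((n:ℕ):ℝ) + 1) * t)) = (-1) * ((((n:ℕ):ℝ) + 1) * t) by ring, mul_pow]
    ring
  rw [h, abs_mul, abs_pow, abs_neg, abs_one, one_pow, one_mul, abs_of_nonneg]
  have := aa_nonneg n
  positivity

lemma cc_row_abs {t : ℝ} (h0 : 0 < t) (n : ℕ) :
    HasSum (fun k => |cc t (n, k)|) (aa n * t ^ n * Real.exp (((n : ℝ) + 1) * t)) := by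
  have h := (exp_hasSum (((n : ℝ) + 1) * t)).mul_left (aa n * t ^ n)
  refine h.congr_fun fun k => ?_
  rw [cc_abs t h0 (n, k)]
  ring

lemma row_bound {t : ℝ} (h0 : 0 < t) (h1 : t < 1/8) (n : ℕ) :
    aa n * t ^ n * Real.exp (((n : ℝ) + 1) * t)
    ≤ Real.exp 1 ^ 2 * (Real.exp 1 ^ 2 / 8) ^ n := by
  have hcast : ((n : ℝ) + 1) = ((n + 1 : ℕ) : ℝ) := by push_cast; ring
  have ht : t ^ n ≤ (1/8 : ℝ) ^ n := pow_le_pow_left₀ h0.le h1.le n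
  have hexp : Real.exp (((n : ℝ) + 1) * t) ≤ Real.exp 1 ^ (n + 1) := by
    calc Real.exp (((n : ℝ) + 1) * t) ≤ Real.exp (((n : ℝ) + 1) * (1/8)) := by
          apply Real.exp_le_exp.mpr
          apply mul_le_mul_of_nonneg_left h1.le (by positivity)
      _ = Real.exp (1/8) ^ (n + 1) := by rw [hcast, Real.exp_nat_mul]
      _ ≤ Real.exp 1 ^ (n + 1) := by
          apply pow_le_pow_left₀ (Real.exp_pos _).le
          exact Real.exp_le_exp.mpr (by norm_num)
  calc aa n * t ^ n * Real.exp (((n : ℝ) + 1) * t)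
      ≤ Real.exp 1 ^ (n + 1) * (1/8 : ℝ) ^ n * Real.exp 1 ^ (n + 1) := by
        apply mul_le_mul (mul_le_mul (aa_le n) ht (by positivity) (by positivity))
          hexp (Real.exp_pos _).le (by positivity)
    _ = Real.exp 1 ^ 2 * (Real.exp 1 ^ 2 / 8) ^ n := by
        ring

lemma cc_abs_summable {t : ℝ} (h0 : 0 < t) (h1 : t < 1/8) :
    Summable (fun p => |cc t p|) := by
  refine (summable_prod_of_nonneg (fun p => abs_nonneg _)).mpr
    ⟨fun n => (cc_row_abs h0 n).summable, ?_⟩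
  have hr : Real.exp 1 ^ 2 / 8 < 1 := by
    rw [div_lt_one (by norm_num)]; exact exp_sq_lt_8
  refine Summable.of_nonneg_of_le (fun n => tsum_nonneg fun k => abs_nonneg _) (fun n => ?_)
    ((summable_geometric_of_lt_one (by positivity) hr).mul_left (Real.exp 1 ^ 2))
  rw [(cc_row_abs h0 n).tsum_eq]
  exact row_bound h0 h1 n

lemma cc_summable {t : ℝ} (h0 : 0 < t) (h1 : t < 1/8) : Summable (cc t) :=
  (cc_abs_summable h0 h1).of_abs

noncomputable def dd (t : ℝ) : ℕ × ℕ → ℝ :=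
  fun p => if p.2 ≤ p.1 then cc t (p.2, p.1 - p.2) else 0

def ii : ℕ × ℕ → ℕ × ℕ := fun p => (p.1 + p.2, p.1)

lemma ii_inj : Function.Injective ii := by
  rintro ⟨a, b⟩ ⟨a', b'⟩ h
  simp only [ii, Prod.mk.injEq] at h
  obtain ⟨h1, h2⟩ := h
  simp only [Prod.mk.injEq]
  omega

lemma dd_ii (t : ℝ) (p : ℕ × ℕ) : dd t (ii p) = cc t p := by
  obtain ⟨n, k⟩ := p
  simp [dd, ii]

lemma dd_supp (t : ℝ) : Function.support (dd t) ⊆ Set.range ii := by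
  rintro ⟨m, n⟩ hd
  by_cases hnm : n ≤ m
  · refine ⟨(n, m - n), ?_⟩
    have h : n + (m - n) = m := by omega
    simp [ii, h]
  · simp [Function.mem_support, dd, hnm] at hd

lemma dd_summable {t : ℝ} (h0 : 0 < t) (h1 : t < 1/8) : Summable (dd t) := by
  refine (ii_inj.summable_iff ?_).mp (((cc_summable h0 h1)).congr fun p => (dd_ii t p).symm)
  intro p hp
  by_contra h
  exact hp (dd_supp t h)

lemma term_eq {t : ℝ} (m n : ℕ) (hn : n ≤ m) (hm : 1 ≤ m) :
    cc t (n, m - n) = (t ^ m / (Nat.factorial m : ℝ)) *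
      ((-1 : ℝ) ^ (m - n) * (m.choose n : ℝ) * ((n : ℝ) + 1) ^ (m - 1)) := by
  obtain ⟨j, rfl⟩ : ∃ j, m = n + j := ⟨m - n, by omega⟩
  have hj : n + j - n = j := by omega
  have hchoose : ((n + j).choose n : ℝ)
      = (Nat.factorial (n + j) : ℝ) / ((Nat.factorial n : ℝ) * (Nat.factorial j : ℝ)) := by
    rw [Nat.cast_choose ℝ (by omega : n ≤ n + j)]
    congr 2
    rw [hj]
  have hkey : ((n : ℝ) + 1) ^ (n + j) = ((n : ℝ) + 1) ^ (n + j - 1) * ((n : ℝ) + 1) := by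
    rw [← pow_succ]
    congr 1
    omega
  simp only [cc, hj, aa]
  rw [hchoose, neg_pow, mul_pow, Nat.factorial_succ]
  have h1 : ((n : ℝ) + 1) ^ n * ((n : ℝ) + 1) ^ j = ((n : ℝ) + 1) ^ (n + j) := by
    rw [← pow_add]
  have h2 : t ^ n * t ^ j = t ^ (n + j) := by rw [← pow_add]
  have hfn : (Nat.factorial n : ℝ) ≠ 0 := Nat.cast_ne_zero.mpr (Nat.factorial_ne_zero n)
  have hfj : (Nat.factorial j : ℝ) ≠ 0 := Nat.cast_ne_zero.mpr (Nat.factorial_ne_zero j)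
  have hfnj : (Nat.factorial (n + j) : ℝ) ≠ 0 := Nat.cast_ne_zero.mpr (Nat.factorial_ne_zero _)
  have hn1 : ((n : ℝ) + 1) ≠ 0 := by positivity
  push_cast
  field_simp
  linear_combination
    ((t ^ n * t ^ j) * h1 + (((n : ℝ) + 1) ^ (n + j)) * h2 + (t ^ (n + j)) * hkey)

lemma local_one {t : ℝ} (h0 : 0 < t) (h1 : t < 1/8) :
    ∑' n : ℕ, aa n * t ^ n * Real.exp (-(((n : ℝ) + 1) * t)) = 1 := by
  have hc := cc_summable h0 h1
  have hd := dd_summable h0 h1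
  have e1 : ∑' n : ℕ, aa n * t ^ n * Real.exp (-(((n : ℝ) + 1) * t)) = ∑' p, cc t p := by
    rw [hc.tsum_prod' hc.prod_factor]
    exact tsum_congr fun n => ((cc_row t n).tsum_eq).symm
  have e2 : ∑' p, cc t p = ∑' p, dd t p := by
    rw [← ii_inj.tsum_eq (dd_supp t)]
    exact tsum_congr fun p => (dd_ii t p).symm
  have e4 : ∀ m : ℕ, ∑' n : ℕ, dd t (m, n) = ∑ n ∈ Finset.range (m + 1), cc t (n, m - n) := by
    intro m
    rw [tsum_eq_sum (s := Finset.range (m + 1))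
      (fun n hn => by
        have h : ¬ (n ≤ m) := by simp only [Finset.mem_range] at hn; omega
        simp [dd, h])]
    refine Finset.sum_congr rfl fun n hn => ?_
    have h : n ≤ m := by simpa [Nat.lt_succ_iff] using Finset.mem_range.mp hn
    simp [dd, h]
  have e5 : ∀ m : ℕ, (∑ n ∈ Finset.range (m + 1), cc t (n, m - n))
      = if m = 0 then 1 else 0 := by
    intro m
    rcases Nat.eq_zero_or_pos m with rfl | hm
    · simp [cc, aa]
    · rw [if_neg (by omega)]
      calc ∑ n ∈ range (m + 1), cc t (n, m - n)
          = ∑ n ∈ range (m + 1), (t ^ m / (Nat.factorial m : ℝ)) *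
              ((-1 : ℝ) ^ (m - n) * (m.choose n : ℝ) * ((n : ℝ) + 1) ^ (m - 1)) :=
            Finset.sum_congr rfl fun n hn =>
              term_eq m n (by simpa [Nat.lt_succ_iff] using Finset.mem_range.mp hn) hm
        _ = (t ^ m / (Nat.factorial m : ℝ)) * ∑ n ∈ range (m + 1),
              (-1 : ℝ) ^ (m - n) * (m.choose n : ℝ) * ((n : ℝ) + 1) ^ (m - 1) := by
            rw [← Finset.mul_sum]
        _ = 0 := by rw [alt_sum_zero m hm, mul_zero]
  rw [e1, e2, hd.tsum_prod' hd.prod_factor, tsum_congr (fun m => (e4 m).trans (e5 m))]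
  exact tsum_ite_eq 0 1

lemma fact_lb (m : ℕ) : Real.sqrt (2 * m) * ((m : ℝ) / Real.exp 1) ^ m
    ≤ (Nat.factorial m : ℝ) := by
  rcases Nat.eq_zero_or_pos m with rfl | hm
  · norm_num
  · obtain ⟨k, rfl⟩ : ∃ k, m = k + 1 := ⟨m - 1, by omega⟩
    have h1 : Real.sqrt π ≤ Stirling.stirlingSeq (k + 1) := by
      refine Antitone.le_of_tendsto Stirling.stirlingSeq'_antitone ?_ k
      exact Stirling.tendsto_stirlingSeq_sqrt_pi.comp (Filter.tendsto_add_atTop_nat 1)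
    have h2 : (1 : ℝ) ≤ Real.sqrt π := by
      rw [show (1:ℝ) = Real.sqrt 1 from (Real.sqrt_one).symm]
      exact Real.sqrt_le_sqrt (by linarith [Real.pi_gt_three])
    have h3 : (1 : ℝ) ≤ Stirling.stirlingSeq (k + 1) := h2.trans h1
    rw [Stirling.stirlingSeq] at h3
    have hpos : 0 < Real.sqrt (2 * (k + 1 : ℕ)) * (((k + 1 : ℕ) : ℝ) / Real.exp 1) ^ (k + 1) := by
      apply mul_pos
      · apply Real.sqrt_pos.mpr; positivity
      · apply pow_pos; positivity
    rw [le_div_iff₀ hpos, one_mul] at h3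
    exact_mod_cast h3

lemma aa_q_bound (n : ℕ) : aa n * Real.exp (-1) ^ n
    ≤ Real.exp 1 / ((((n : ℝ) + 1)) * Real.sqrt ((n : ℝ) + 1)) := by
  set E := Real.exp 1 with hE
  set m : ℕ := n + 1 with hm
  have hmr : ((m : ℕ) : ℝ) = (n : ℝ) + 1 := by push_cast [hm]; ring
  have hEpos : 0 < E := Real.exp_pos 1
  have hmpos : (0:ℝ) < (n : ℝ) + 1 := by positivity
  have hS : 0 < Real.sqrt ((n : ℝ) + 1) := Real.sqrt_pos.mpr hmpos
  have hfac : Real.sqrt ((n : ℝ) + 1) * (((n : ℝ) + 1) / E) ^ m ≤ (Nat.factorial m : ℝ) := by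
    refine le_trans ?_ (fact_lb m)
    rw [hmr]
    apply mul_le_mul_of_nonneg_right _ (by positivity)
    apply Real.sqrt_le_sqrt
    linarith
  have hfacpos : (0:ℝ) < (Nat.factorial m : ℝ) := by
    exact_mod_cast Nat.factorial_pos m
  have lhs_eq : aa n * Real.exp (-1) ^ n = ((n : ℝ) + 1) ^ n * (E⁻¹) ^ n / (Nat.factorial m : ℝ) := by
    rw [aa, Real.exp_neg]
    ring
  rw [lhs_eq, div_le_div_iff₀ hfacpos (by positivity)]
  calc ((n : ℝ) + 1) ^ n * E⁻¹ ^ n * (((n : ℝ) + 1) * Real.sqrt ((n : ℝ) + 1))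
      = E * (Real.sqrt ((n : ℝ) + 1) * (((n : ℝ) + 1) / E) ^ m) := by
        rw [hm, div_pow]
        field_simp
        have hEE : E ^ n * E⁻¹ ^ n = 1 := by rw [← mul_pow, mul_inv_cancel₀ hEpos.ne', one_pow]
        linear_combination ((n : ℝ) * E * (1 + (n : ℝ)) ^ n + E * (1 + (n : ℝ)) ^ n) * hEE
    _ ≤ E * (Nat.factorial m : ℝ) := by
        exact mul_le_mul_of_nonneg_left hfac hEpos.le

noncomputable def MM (n : ℕ) : ℝ := Real.exp 1 / ((((n : ℝ) + 1)) * Real.sqrt ((n : ℝ) + 1))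

lemma MM_summable : Summable MM := by
  have h0 : Summable (fun n : ℕ => 1 / (n : ℝ) ^ (3/2 : ℝ)) :=
    Real.summable_one_div_nat_rpow.mpr (by norm_num)
  have h1 : Summable (fun n : ℕ => 1 / ((n : ℝ) + 1) ^ (3/2 : ℝ)) := by
    have := (summable_nat_add_iff 1).mpr h0
    refine this.congr fun n => ?_
    push_cast
    norm_num
  refine (h1.mul_left (Real.exp 1)).congr fun n => ?_
  have hx : (0:ℝ) ≤ (n : ℝ) + 1 := by positivity
  have : ((n : ℝ) + 1) ^ (3/2 : ℝ) = ((n : ℝ) + 1) * Real.sqrt ((n : ℝ) + 1) := by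
    rw [show (3/2 : ℝ) = 1 + 1/2 by norm_num, Real.rpow_add (by positivity), Real.rpow_one,
      Real.sqrt_eq_rpow]
  rw [MM, this]
  ring

lemma aa_bound_of_le {x : ℝ} (n : ℕ) (h0 : 0 ≤ x) (h1 : x ≤ Real.exp (-1)) :
    aa n * x ^ n ≤ MM n := by
  refine le_trans ?_ (aa_q_bound n)
  exact mul_le_mul_of_nonneg_left (pow_le_pow_left₀ h0 h1 n) (aa_nonneg n)

noncomputable def clampq (x : ℝ) : ℝ := max 0 (min x (Real.exp (-1)))

lemma clampq_nonneg (x : ℝ) : 0 ≤ clampq x := le_max_left _ _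

lemma clampq_le (x : ℝ) : clampq x ≤ Real.exp (-1) :=
  max_le (Real.exp_pos _).le (min_le_right _ _)

lemma clampq_eq {x : ℝ} (h0 : 0 ≤ x) (h1 : x ≤ Real.exp (-1)) : clampq x = x := by
  rw [clampq, min_eq_left h1, max_eq_right h0]

noncomputable def GG (x : ℝ) : ℝ := ∑' n : ℕ, aa n * x ^ n

noncomputable def FF (t : ℝ) : ℝ := ∑' n : ℕ, aa n * clampq (t * Real.exp (-t)) ^ n

lemma FF_cont : Continuous FF := by
  refine continuous_tsum (fun n => ?_) MM_summable (fun n x => ?_)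
  · exact continuous_const.mul ((continuous_const.max
      ((continuous_id.mul (Real.continuous_exp.comp continuous_neg)).min
        continuous_const)).pow n)
  · have hnn : (0:ℝ) ≤ aa n * clampq (x * Real.exp (-x)) ^ n :=
      mul_nonneg (aa_nonneg n) (pow_nonneg (clampq_nonneg _) n)
    rw [Real.norm_eq_abs, abs_of_nonneg hnn]
    exact aa_bound_of_le n (clampq_nonneg _) (clampq_le _)

noncomputable def ps : FormalMultilinearSeries ℝ ℝ ℝ := FormalMultilinearSeries.ofScalars ℝ aa

lemma GG_eq_sum : GG = ps.sum := by
  funext x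
  have h := FormalMultilinearSeries.ofScalars_sum_eq (E := ℝ) (c := aa) x
  simp only [FormalMultilinearSeries.ofScalarsSum] at h
  rw [GG, ps, h]
  simp [smul_eq_mul]

noncomputable def rq : NNReal := ⟨Real.exp (-1), (Real.exp_pos _).le⟩

lemma ps_radius : (rq : ENNReal) ≤ ps.radius := by
  refine ps.le_radius_of_summable ?_
  refine (Summable.of_nonneg_of_le (fun n => by positivity) (fun n => ?_) MM_summable)
  have : ‖ps n‖ = |aa n| := by
    rw [ps, FormalMultilinearSeries.ofScalars_norm ℝ aa n, Real.norm_eq_abs]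
  rw [this, abs_of_nonneg (aa_nonneg n)]
  exact aa_bound_of_le n (Real.exp_pos _).le le_rfl

lemma GG_analyticAt {x : ℝ} (hx : |x| < Real.exp (-1)) : AnalyticAt ℝ GG x := by
  have hradpos : 0 < ps.radius :=
    lt_of_lt_of_le (by exact_mod_cast ENNReal.coe_pos.mpr (show 0 < rq from Real.exp_pos _)) ps_radius
  have hball := ps.hasFPowerSeriesOnBall hradpos
  have hmem : x ∈ EMetric.ball (0 : ℝ) ps.radius := by
    show edist x 0 < ps.radius
    rw [edist_dist, Real.dist_eq, sub_zero]
    refine lt_of_lt_of_le ?_ ps_radius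
    rw [show (rq : ENNReal) = ENNReal.ofReal (Real.exp (-1)) from
      (ENNReal.ofReal_eq_coe_nnreal (Real.exp_pos _).le).symm]
    exact (ENNReal.ofReal_lt_ofReal_iff (Real.exp_pos _)).mpr hx
  rw [GG_eq_sum]
  exact hball.analyticAt_of_mem hmem

lemma arg_lt {t : ℝ} (ht : t ∈ Set.Ioo (-(1/8) : ℝ) 1) : |t * Real.exp (-t)| < Real.exp (-1) := by
  obtain ⟨hl, hr⟩ := ht
  have e2 : Real.exp 1 ^ 2 = Real.exp 2 := by
    rw [← Real.exp_nat_mul]; norm_num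
  rcases le_or_gt t 0 with h | h
  · have habs : |t * Real.exp (-t)| = |t| * Real.exp (-t) := by
      rw [abs_mul, abs_of_pos (Real.exp_pos _)]
    have h1 : |t| < 1/8 := by rw [abs_of_nonpos h]; linarith
    have h2 : Real.exp (-t) ≤ Real.exp (1/8) := Real.exp_le_exp.mpr (by linarith)
    have hAB : Real.exp (1/8) * Real.exp 1 < 8 := by
      have h9 : Real.exp (1/8) * Real.exp 1 = Real.exp (9/8) := by
        rw [← Real.exp_add]; norm_num
      rw [h9]
      calc Real.exp (9/8) ≤ Real.exp 2 := Real.exp_le_exp.mpr (by norm_num)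
        _ = Real.exp 1 ^ 2 := e2.symm
        _ < 8 := exp_sq_lt_8
    have target : (1/8 : ℝ) * Real.exp (1/8) < Real.exp (-1) := by
      rw [Real.exp_neg, ← one_div]
      rw [lt_div_iff₀ (Real.exp_pos 1)]
      nlinarith
    calc |t * Real.exp (-t)| = |t| * Real.exp (-t) := habs
      _ ≤ |t| * Real.exp (1/8) := mul_le_mul_of_nonneg_left h2 (abs_nonneg t)
      _ < (1/8) * Real.exp (1/8) := mul_lt_mul_of_pos_right h1 (Real.exp_pos _)
      _ < Real.exp (-1) := target
  · have habs : |t * Real.exp (-t)| = t * Real.exp (-t) := by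
      rw [abs_of_pos (by positivity)]
    rw [habs]
    have h1 : t < Real.exp (t - 1) := by
      have := Real.add_one_lt_exp (x := t - 1) (by intro hc; rw [sub_eq_zero] at hc; exact hr.ne hc)
      linarith
    calc t * Real.exp (-t) < Real.exp (t - 1) * Real.exp (-t) :=
          mul_lt_mul_of_pos_right h1 (Real.exp_pos _)
      _ = Real.exp (-1) := by rw [← Real.exp_add]; ring_nf

lemma local_G {s : ℝ} (h0 : 0 < s) (h1 : s < 1/8) :
    GG (s * Real.exp (-s)) = Real.exp s := by
  calc GG (s * Real.exp (-s))
      = ∑' n : ℕ, Real.exp s * (aa n * s ^ n * Real.exp (-(((n : ℝ) + 1) * s))) := by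
        rw [GG]
        refine tsum_congr fun n => ?_
        rw [mul_pow, ← Real.exp_nat_mul,
          show (n : ℝ) * (-s) = s + -(((n : ℝ) + 1) * s) by ring, Real.exp_add]
        ring
    _ = Real.exp s * ∑' n : ℕ, (aa n * s ^ n * Real.exp (-(((n : ℝ) + 1) * s))) := tsum_mul_left
    _ = Real.exp s := by rw [local_one h0 h1, mul_one]

lemma eq_on_U : Set.EqOn (fun t => GG (t * Real.exp (-t))) Real.exp
    (Set.Ioo (-(1/8) : ℝ) 1) := by
  have hanalF : AnalyticOnNhd ℝ (fun t => GG (t * Real.exp (-t))) (Set.Ioo (-(1/8) : ℝ) 1) := by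
    intro t ht
    have hinner : AnalyticAt ℝ (fun s : ℝ => s * Real.exp (-s)) t := by
      exact (analyticAt_id).mul (analyticAt_rexp.comp (analyticAt_id.neg))
    exact AnalyticAt.comp (g := GG) (f := fun s : ℝ => s * Real.exp (-s))
      (GG_analyticAt (arg_lt ht)) hinner
  have hanalE : AnalyticOnNhd ℝ Real.exp (Set.Ioo (-(1/8) : ℝ) 1) :=
    fun t _ => analyticAt_rexp
  have hev : (fun t => GG (t * Real.exp (-t))) =ᶠ[nhds (1/16 : ℝ)] Real.exp := by
    refine Filter.eventuallyEq_of_mem (Ioo_mem_nhds (by norm_num) (by norm_num) :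
      Set.Ioo (0 : ℝ) (1/8) ∈ nhds (1/16 : ℝ)) (fun s hs => ?_)
    exact local_G hs.1 hs.2
  exact hanalF.eqOn_of_preconnected_of_eventuallyEq hanalE isPreconnected_Ioo
    (by constructor <;> norm_num) hev

lemma arg_mem {t : ℝ} (ht0 : 0 ≤ t) : 0 ≤ t * Real.exp (-t) ∧
    t * Real.exp (-t) ≤ Real.exp (-1) := by
  constructor
  · positivity
  · have h1 : t ≤ Real.exp (t - 1) := by
      have := Real.add_one_le_exp (t - 1)
      linarith
    calc t * Real.exp (-t) ≤ Real.exp (t - 1) * Real.exp (-t) :=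
          mul_le_mul_of_nonneg_right h1 (Real.exp_pos _).le
      _ = Real.exp (-1) := by rw [← Real.exp_add]; ring_nf

lemma FF_eq_exp : Set.EqOn FF Real.exp (Set.Icc (0 : ℝ) 1) := by
  have hico : Set.EqOn FF Real.exp (Set.Ico (0 : ℝ) 1) := by
    intro t ht
    obtain ⟨ht0, ht1⟩ := ht
    rcases eq_or_lt_of_le ht0 with rfl | htpos
    · have h00 : clampq ((0:ℝ) * Real.exp (-(0:ℝ))) = 0 := by
        rw [zero_mul, clampq_eq le_rfl (Real.exp_pos _).le]
      rw [FF, h00, Real.exp_zero]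
      rw [tsum_eq_single 0 (fun n hn => by simp [zero_pow hn])]
      simp [aa]
    · have ham := arg_mem htpos.le
      have hc : clampq (t * Real.exp (-t)) = t * Real.exp (-t) := clampq_eq ham.1 ham.2
      have hFG : FF t = GG (t * Real.exp (-t)) := by rw [FF, GG, hc]
      rw [hFG]
      exact eq_on_U ⟨by linarith, ht1⟩
  have hclos := hico.closure FF_cont Real.continuous_exp
  rwa [closure_Ico (by norm_num : (0:ℝ) ≠ 1)] at hclos

/-- Σ_{n≥1} (n^{n-1}/n!) (t e^{-t})^{n-1} = e^t for t ∈ [0,1]. -/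
theorem stmt_10 (t : ℝ) (ht : t ∈ Set.Icc (0 : ℝ) 1) :
    ∑' n : ℕ, ((n + 1 : ℝ) ^ n / (Nat.factorial (n + 1) : ℝ)) * (t * Real.exp (-t)) ^ n
      = Real.exp t := by
  have ham := arg_mem ht.1
  have hc : clampq (t * Real.exp (-t)) = t * Real.exp (-t) := clampq_eq ham.1 ham.2
  calc ∑' n : ℕ, ((n + 1 : ℝ) ^ n / (Nat.factorial (n + 1) : ℝ)) * (t * Real.exp (-t)) ^ n
      = FF t := by
        rw [FF]
        refine tsum_congr fun n => ?_
        rw [hc, aa]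
    _ = Real.exp t := FF_eq_exp ht
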